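/- arXiv:1605.02324 — 2 statements merged into one kernel-verified Lean document; each statement's English description precedes it below -/
import Mathlib

section
/- Let Z ~ N(0,1), α = 1, and Ψ(σ²) = E[(F¹(1 + σZ) - 1)²] with F¹ the projection onto [-1,1]. Then for all σ > 0, the derivative of Ψ with respect to σ² satisfies dΨ/dσ² ≤ 1/2, and dΨ/dσ² → 1/2 as σ² → 0⁺. -/
open ProbabilityTheory MeasureTheory Set Filter

noncomputable def phi (x : ℝ) : ℝ := (Real.sqrt (2 * Real.pi))⁻¹ * Real.exp (-x ^ 2 / 2)

noncomputable def Qf (t : ℝ) : ℝ := ∫ x in Set.Ioi t, phi x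

lemma phi_nonneg (x : ℝ) : 0 ≤ phi x := by
  unfold phi; positivity

lemma phi_even (x : ℝ) : phi (-x) = phi x := by
  simp [phi]

lemma continuous_phi : Continuous phi := by
  unfold phi; fun_prop

lemma integrable_phi : Integrable phi := by
  have h : Integrable (fun x : ℝ => Real.exp (-(1/2 : ℝ) * x ^ 2)) :=
    integrable_exp_neg_mul_sq (by norm_num)
  have h2 := h.const_mul (Real.sqrt (2 * Real.pi))⁻¹
  refine h2.congr ?_
  filter_upwards with x
  unfold phi
  ring_nf

lemma integral_phi : ∫ x, phi x = 1 := by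
  have h : ∫ x : ℝ, Real.exp (-(1/2 : ℝ) * x ^ 2) = Real.sqrt (Real.pi / (1/2)) :=
    integral_gaussian (1/2)
  have h2 : ∫ x : ℝ, phi x = (Real.sqrt (2 * Real.pi))⁻¹ * ∫ x : ℝ, Real.exp (-(1/2:ℝ) * x ^ 2) := by
    rw [← integral_const_mul]
    congr 1 with x
    unfold phi; ring_nf
  rw [h2, h]
  have : Real.pi / (1/2) = 2 * Real.pi := by ring
  rw [this]
  rw [inv_mul_cancel₀]
  positivity

lemma Qf_nonneg (t : ℝ) : 0 ≤ Qf t :=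
  setIntegral_nonneg measurableSet_Ioi (fun x _ => phi_nonneg x)

lemma integral_Iic_phi (t : ℝ) : ∫ x in Set.Iic t, phi x = 1 - Qf t := by
  have := intervalIntegral.integral_Iic_add_Ioi (b := t) (f := phi) (μ := volume)
    integrable_phi.integrableOn integrable_phi.integrableOn
  rw [integral_phi] at this
  unfold Qf
  linarith

lemma Qf_neg (t : ℝ) : Qf (-t) = 1 - Qf t := by
  have h := integral_comp_neg_Iic t phi
  have h2 : (∫ x in Set.Iic t, phi (-x)) = ∫ x in Set.Iic t, phi x := by
    congr 1 with x; exact phi_even x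
  rw [h2, integral_Iic_phi] at h
  unfold Qf at h ⊢
  linarith

lemma Qf_zero : Qf 0 = 1 / 2 := by
  have := Qf_neg 0
  rw [neg_zero] at this
  linarith

lemma hasDerivAt_phi (x : ℝ) : HasDerivAt phi (-x * phi x) x := by
  have h1 : HasDerivAt (fun x : ℝ => -x ^ 2 / 2) (-x) x := by
    have := ((hasDerivAt_pow 2 x).neg).div_const 2
    simpa using this.congr_deriv (by ring)
  have h2 := (h1.exp).const_mul (Real.sqrt (2 * Real.pi))⁻¹
  refine h2.congr_deriv ?_
  unfold phi
  ring

lemma hasDerivAt_Qf (t : ℝ) : HasDerivAt Qf (-phi t) t := by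
  have key : ∀ u : ℝ, Qf u = Qf 0 - ∫ x in (0:ℝ)..u, phi x := by
    intro u
    have h := intervalIntegral.integral_Iic_sub_Iic (μ := volume) (f := phi)
      integrable_phi.integrableOn integrable_phi.integrableOn (a := (0:ℝ)) (b := u)
    rw [integral_Iic_phi, integral_Iic_phi] at h
    linarith
  have hD : HasDerivAt (fun u => ∫ x in (0:ℝ)..u, phi x) (phi t) t := by
    refine intervalIntegral.integral_hasDerivAt_right
      integrable_phi.intervalIntegrable ?_ continuous_phi.continuousAt
    exact continuous_phi.stronglyMeasurable.stronglyMeasurableAtFilter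
  have := (hasDerivAt_const t (Qf 0)).sub hD
  refine (this.congr_deriv (by ring)).congr_of_eventuallyEq ?_
  filter_upwards with u using (key u)

lemma Qf_le (t : ℝ) (ht : 0 < t) : Qf t ≤ phi t / t := by
  have hint : Integrable (fun x : ℝ => x * phi x) := by
    have h : Integrable (fun x : ℝ => x * Real.exp (-(1/2 : ℝ) * x ^ 2)) :=
      integrable_mul_exp_neg_mul_sq (by norm_num)
    have h2 := h.const_mul (Real.sqrt (2 * Real.pi))⁻¹
    refine h2.congr ?_
    filter_upwards with x
    unfold phi; ring_nf
  have hIoi : ∫ x in Set.Ioi t, x * phi x = phi t := by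
    have := integral_Ioi_of_hasDerivAt_of_tendsto (f := fun x => -phi x)
      (f' := fun x => x * phi x) (a := t) (m := 0)
      ((continuous_phi.neg).continuousWithinAt)
      (fun x _ => by exact (hasDerivAt_phi x).neg.congr_deriv (by ring))
      hint.integrableOn ?_
    · rw [this]; ring
    · have hp : Tendsto (fun x : ℝ => x ^ 2) atTop atTop :=
        tendsto_pow_atTop two_ne_zero
      have h1 : Tendsto (fun x : ℝ => -x ^ 2 / 2) atTop atBot :=
        Tendsto.atBot_div_const (by norm_num) (tendsto_neg_atTop_atBot.comp hp)
      have h2 : Tendsto phi atTop (nhds 0) := by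
        have h3 := (Real.tendsto_exp_atBot.comp h1).const_mul (Real.sqrt (2 * Real.pi))⁻¹
        rw [mul_zero] at h3
        exact h3.congr (fun x => by simp [phi, Function.comp])
      simpa using h2.neg
  have hmono : Qf t ≤ ∫ x in Set.Ioi t, (x / t) * phi x := by
    refine setIntegral_mono_on integrable_phi.integrableOn ?_ measurableSet_Ioi ?_
    · exact ((hint.div_const t).congr (by filter_upwards with x; ring)).integrableOn
    · intro x hx
      have hx1 : 1 ≤ x / t := (one_le_div ht).mpr (le_of_lt hx)
      nlinarith [phi_nonneg x]
  calc Qf t ≤ ∫ x in Set.Ioi t, (x / t) * phi x := hmono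
    _ = (∫ x in Set.Ioi t, x * phi x) / t := by
        rw [← integral_div]; congr 1 with x; ring
    _ = phi t / t := by rw [hIoi]

lemma gaussianPDFReal_eq_phi : gaussianPDFReal 0 1 = phi := by
  ext x
  simp only [gaussianPDFReal, phi, NNReal.coe_one, mul_one, sub_zero, one_div]

lemma integral_gauss_eq (g : ℝ → ℝ) :
    (∫ z, g z ∂(gaussianReal 0 1)) = ∫ z, g z * phi z := by
  rw [gaussianReal_of_var_ne_zero 0 one_ne_zero]
  have h : gaussianPDF 0 1 = fun x => ((Real.toNNReal (phi x) : NNReal) : ENNReal) := by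
    ext x
    rw [gaussianPDF, gaussianPDFReal_eq_phi]
    rfl
  rw [h, integral_withDensity_eq_integral_smul
    (by exact (continuous_phi.measurable).real_toNNReal) g]
  congr 1 with x
  rw [NNReal.smul_def, smul_eq_mul, Real.coe_toNNReal _ (phi_nonneg x), mul_comm]

noncomputable def gclip (s z : ℝ) : ℝ := (max (-1 : ℝ) (min 1 (1 + s * z)) - 1) ^ 2

lemma gclip_left {s z : ℝ} (h : 1 + s * z ≤ -1) : gclip s z = 4 := by
  unfold gclip
  rw [min_eq_right (by linarith), max_eq_left (by linarith)]
  norm_num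

lemma gclip_mid {s z : ℝ} (h1 : -1 ≤ 1 + s * z) (h2 : 1 + s * z ≤ 1) :
    gclip s z = (s * z) ^ 2 := by
  unfold gclip
  rw [min_eq_right h2, max_eq_right h1]
  ring

lemma gclip_right {s z : ℝ} (h : 1 ≤ 1 + s * z) : gclip s z = 0 := by
  unfold gclip
  rw [min_eq_left h, max_eq_right (by norm_num)]
  ring

lemma gclip_continuous (s : ℝ) : Continuous (gclip s) := by
  unfold gclip
  apply Continuous.pow
  exact (continuous_const.max (continuous_const.min (by fun_prop))).sub continuous_const

lemma gclip_bdd (s z : ℝ) : ‖gclip s z‖ ≤ 4 := by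
  have h1 : (-1 : ℝ) ≤ max (-1) (min 1 (1 + s * z)) := le_max_left _ _
  have h2 : max (-1 : ℝ) (min 1 (1 + s * z)) ≤ 1 :=
    max_le (by norm_num) (min_le_left _ _)
  unfold gclip
  rw [Real.norm_eq_abs, abs_of_nonneg (sq_nonneg _)]
  nlinarith

lemma closed_form (v : ℝ) (hv : 0 < v) :
    (∫ z, gclip (Real.sqrt v) z ∂(gaussianReal 0 1))
      = v / 2 - 2 * Real.sqrt v * phi (2 / Real.sqrt v)
        + (4 - v) * Qf (2 / Real.sqrt v) := by
  set s := Real.sqrt v with hs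
  have hs0 : 0 < s := Real.sqrt_pos.mpr hv
  have hsv : s ^ 2 = v := Real.sq_sqrt hv.le
  set t := 2 / s with htdef
  have ht0 : 0 < t := by positivity
  have hts : t * s = 2 := by rw [htdef]; field_simp
  have hint : Integrable (fun z => gclip s z * phi z) :=
    integrable_phi.bdd_mul (gclip_continuous s).aestronglyMeasurable (c := 4) (ae_of_all _ (gclip_bdd s))
  rw [integral_gauss_eq]
  have hsplit1 : (∫ z, gclip s z * phi z)
      = (∫ z in Set.Iic (0:ℝ), gclip s z * phi z) + ∫ z in Set.Ioi (0:ℝ), gclip s z * phi z :=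
    (intervalIntegral.integral_Iic_add_Ioi hint.integrableOn hint.integrableOn).symm
  have hsplit2 : (∫ z in Set.Iic (0:ℝ), gclip s z * phi z)
      = (∫ z in Set.Iic (-t), gclip s z * phi z)
        + ∫ z in Set.Ioc (-t) (0:ℝ), gclip s z * phi z := by
    rw [← setIntegral_union (Set.Iic_disjoint_Ioc le_rfl) measurableSet_Ioc
      hint.integrableOn hint.integrableOn, Set.Iic_union_Ioc_eq_Iic (by linarith)]
  have hC : (∫ z in Set.Ioi (0:ℝ), gclip s z * phi z) = 0 := by
    refine setIntegral_eq_zero_of_forall_eq_zero fun z hz => ?_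
    have hz' : (0:ℝ) < z := hz
    rw [gclip_right (by nlinarith), zero_mul]
  have hA : (∫ z in Set.Iic (-t), gclip s z * phi z) = 4 * Qf t := by
    have heq : ∀ z ∈ Set.Iic (-t), gclip s z * phi z = 4 * phi z := by
      intro z hz
      have hz' : z ≤ -t := hz
      rw [gclip_left (by nlinarith)]
    rw [setIntegral_congr_fun measurableSet_Iic heq, integral_const_mul,
      integral_Iic_phi, Qf_neg]
    ring
  have hB : (∫ z in Set.Ioc (-t) (0:ℝ), gclip s z * phi z)
      = v * (1/2 - Qf t - t * phi t) := by
    have heq : ∀ z ∈ Set.Ioc (-t) (0:ℝ), gclip s z * phi z = s^2 * (z^2 * phi z) := by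
      intro z hz
      obtain ⟨hz1, hz2⟩ := hz
      rw [gclip_mid (by nlinarith) (by nlinarith)]
      ring
    rw [setIntegral_congr_fun measurableSet_Ioc heq,
      ← intervalIntegral.integral_of_le (by linarith : -t ≤ (0:ℝ))]
    have hftc := intervalIntegral.integral_eq_sub_of_hasDerivAt
      (f := fun z => s^2 * (-Qf z - z * phi z))
      (f' := fun z => s^2 * (z^2 * phi z)) (a := -t) (b := 0)
      (fun z _ => by
        have h := (((hasDerivAt_Qf z).neg.sub
          ((hasDerivAt_id z).mul (hasDerivAt_phi z)))).const_mul (s^2)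
        exact h.congr_deriv (by simp only [id_eq]; ring))
      (Continuous.intervalIntegrable (continuous_const.mul ((continuous_pow 2).mul continuous_phi)) _ _)
    rw [hftc]
    show s^2 * (-Qf 0 - 0 * phi 0) - s^2 * (-Qf (-t) - -t * phi (-t))
        = v * (1/2 - Qf t - t * phi t)
    rw [Qf_zero, Qf_neg, phi_even, ← hsv]
    ring
  rw [hsplit1, hsplit2, hA, hB, hC]
  have hvt : v * t = 2 * s := by
    rw [htdef, ← hsv]
    rw [div_eq_mul_inv]
    field_simp
  linear_combination (-(phi t)) * hvt

noncomputable def Gf (w : ℝ) : ℝ :=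
  w / 2 - 2 * Real.sqrt w * phi (2 / Real.sqrt w) + (4 - w) * Qf (2 / Real.sqrt w)

lemma hasDerivAt_Gf (v : ℝ) (hv : 0 < v) :
    HasDerivAt Gf
      (1 / 2 - Qf (2 / Real.sqrt v) - 2 * phi (2 / Real.sqrt v) / Real.sqrt v) v := by
  have hs0 : 0 < Real.sqrt v := Real.sqrt_pos.mpr hv
  set s := Real.sqrt v with hs
  have hs0' : s ≠ 0 := ne_of_gt hs0
  have hsv : s ^ 2 = v := Real.sq_sqrt hv.le
  have hS : HasDerivAt Real.sqrt (1 / (2 * s)) v := Real.hasDerivAt_sqrt hv.ne'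
  have hT : HasDerivAt (fun w => 2 / Real.sqrt w) (2 * (-(1 / (2 * s)) / s ^ 2)) v := by
    simpa [div_eq_mul_inv] using (hS.inv hs0').const_mul (2 : ℝ)
  set t := 2 / s with htdef
  set t' := 2 * (-(1 / (2 * s)) / s ^ 2) with ht'def
  have hPhiT := (hasDerivAt_phi t).comp v hT
  have hQT := (hasDerivAt_Qf t).comp v hT
  have h1 : HasDerivAt (fun w : ℝ => w / 2) ((1:ℝ) / 2) v := (hasDerivAt_id v).div_const 2
  have h2 := (hS.const_mul (2 : ℝ)).mul hPhiT
  have h3 := ((hasDerivAt_const v (4 : ℝ)).sub (hasDerivAt_id v)).mul hQT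
  have total := (h1.sub h2).add h3
  unfold Gf
  refine HasDerivAt.congr_deriv total ?_
  rw [htdef, ht'def, ← hsv]
  simp only [Pi.sub_apply, Function.comp_apply, id_eq, Real.sqrt_sq hs0.le]
  field_simp
  ring

lemma phi_le (x : ℝ) : phi x ≤ (Real.sqrt (2 * Real.pi))⁻¹ := by
  unfold phi
  have h1 : Real.exp (-x ^ 2 / 2) ≤ 1 := Real.exp_le_one_iff.mpr (by nlinarith [sq_nonneg x])
  have h2 : (0:ℝ) ≤ (Real.sqrt (2 * Real.pi))⁻¹ := by positivity
  nlinarith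

lemma phi_two_div_sqrt {v : ℝ} (hv : 0 < v) :
    phi (2 / Real.sqrt v) = (Real.sqrt (2 * Real.pi))⁻¹ * Real.exp (-(2 / v)) := by
  unfold phi
  congr 2
  rw [div_pow, Real.sq_sqrt hv.le]
  ring

lemma tendsto_mul_exp_neg_two : Tendsto (fun u : ℝ => u * Real.exp (-(2 * u))) atTop (nhds 0) := by
  refine squeeze_zero' ?_ ?_ (Real.tendsto_pow_mul_exp_neg_atTop_nhds_zero 1)
  · filter_upwards [eventually_ge_atTop (0:ℝ)] with u hu
    positivity
  · filter_upwards [eventually_ge_atTop (0:ℝ)] with u hu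
    have h : Real.exp (-(2 * u)) ≤ Real.exp (-u) := Real.exp_le_exp.mpr (by linarith)
    calc u * Real.exp (-(2 * u)) ≤ u * Real.exp (-u) :=
          mul_le_mul_of_nonneg_left h hu
      _ = u ^ 1 * Real.exp (-u) := by ring

lemma tendsto_Q_term :
    Tendsto (fun v : ℝ => Qf (2 / Real.sqrt v)) (nhdsWithin 0 (Set.Ioi 0)) (nhds 0) := by
  set c := (Real.sqrt (2 * Real.pi))⁻¹ with hc
  have hsq : Tendsto Real.sqrt (nhdsWithin 0 (Set.Ioi 0)) (nhds 0) := by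
    have := (Real.continuous_sqrt.tendsto' 0 0 (by simp))
    exact this.mono_left nhdsWithin_le_nhds
  have hg : Tendsto (fun v : ℝ => c / 2 * Real.sqrt v) (nhdsWithin 0 (Set.Ioi 0)) (nhds 0) := by
    simpa using hsq.const_mul (c / 2)
  refine squeeze_zero' ?_ ?_ hg
  · filter_upwards [self_mem_nhdsWithin] with v _
    exact Qf_nonneg _
  · filter_upwards [self_mem_nhdsWithin] with v hv
    have hv' : (0:ℝ) < v := hv
    have hs0 : 0 < Real.sqrt v := Real.sqrt_pos.mpr hv'
    have ht0 : 0 < 2 / Real.sqrt v := by positivity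
    calc Qf (2 / Real.sqrt v) ≤ phi (2 / Real.sqrt v) / (2 / Real.sqrt v) :=
          Qf_le _ ht0
      _ = phi (2 / Real.sqrt v) * Real.sqrt v / 2 := by
          rw [div_div_eq_mul_div]
      _ ≤ c * Real.sqrt v / 2 := by gcongr; exact phi_le _
      _ = c / 2 * Real.sqrt v := by ring

lemma tendsto_phi_term :
    Tendsto (fun v : ℝ => 2 * phi (2 / Real.sqrt v) / Real.sqrt v)
      (nhdsWithin 0 (Set.Ioi 0)) (nhds 0) := by
  set c := (Real.sqrt (2 * Real.pi))⁻¹ with hc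
  have hc0 : 0 < c := by rw [hc]; positivity
  have hg : Tendsto (fun v : ℝ => 2 * c * ((1 / v) * Real.exp (-(2 * (1 / v)))))
      (nhdsWithin 0 (Set.Ioi 0)) (nhds 0) := by
    have hinv : Tendsto (fun v : ℝ => 1 / v) (nhdsWithin 0 (Set.Ioi 0)) atTop := by
      simpa [one_div] using tendsto_inv_nhdsGT_zero (𝕜 := ℝ)
    have := (tendsto_mul_exp_neg_two.comp hinv).const_mul (2 * c)
    simpa using this
  refine squeeze_zero' ?_ ?_ hg
  · filter_upwards [self_mem_nhdsWithin] with v hv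
    have hv' : (0:ℝ) < v := hv
    have hs0 : 0 < Real.sqrt v := Real.sqrt_pos.mpr hv'
    exact div_nonneg (mul_nonneg (by norm_num) (phi_nonneg _)) hs0.le
  · filter_upwards [self_mem_nhdsWithin,
      Filter.Eventually.filter_mono nhdsWithin_le_nhds (Iio_mem_nhds (by norm_num : (0:ℝ) < 1))]
      with v hv hv1
    have hv' : (0:ℝ) < v := hv
    have hv1' : v < 1 := hv1
    have hs0 : 0 < Real.sqrt v := Real.sqrt_pos.mpr hv'
    have hsv : Real.sqrt v ^ 2 = v := Real.sq_sqrt hv'.le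
    have hvs : v ≤ Real.sqrt v := by nlinarith
    rw [phi_two_div_sqrt hv']
    have h1 : (Real.sqrt v)⁻¹ ≤ v⁻¹ := inv_anti₀ hv' hvs
    have hE : (0:ℝ) < Real.exp (-(2 / v)) := Real.exp_pos _
    calc 2 * ((Real.sqrt (2 * Real.pi))⁻¹ * Real.exp (-(2 / v))) / Real.sqrt v
        = 2 * (c * Real.exp (-(2 / v))) * (Real.sqrt v)⁻¹ := by rw [hc, div_eq_mul_inv]
      _ ≤ 2 * (c * Real.exp (-(2 / v))) * v⁻¹ := by
          apply mul_le_mul_of_nonneg_left h1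
          positivity
      _ = 2 * c * (1 / v * Real.exp (-(2 * (1 / v)))) := by
          have harg : -(2 * (1 / v)) = -(2 / v) := by ring
          rw [harg]; ring

/-- For the BPSK clipping-denoiser MSE Ψ(v) = E[(F¹(1+√v·Z)-1)²] (v = σ²),
its derivative satisfies dΨ/dv ≤ 1/2 for all v > 0, and tends to 1/2 as v → 0⁺. -/
theorem stmt_8
    (Ψ : ℝ → ℝ)
    (hΨ : ∀ v, Ψ v =
      ∫ z, (max (-1 : ℝ) (min 1 (1 + Real.sqrt v * z)) - 1) ^ 2 ∂(gaussianReal 0 1)) :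
    (∀ v : ℝ, 0 < v → deriv Ψ v ≤ 1 / 2) ∧
    Filter.Tendsto (deriv Ψ) (nhdsWithin 0 (Set.Ioi 0)) (nhds (1 / 2)) := by
  have hderiv : ∀ v : ℝ, 0 < v →
      deriv Ψ v = 1 / 2 - Qf (2 / Real.sqrt v)
        - 2 * phi (2 / Real.sqrt v) / Real.sqrt v := by
    intro v hv
    have heq : ∀ w ∈ Set.Ioi (0:ℝ), Ψ w = Gf w := by
      intro w hw
      have hw' : (0:ℝ) < w := hw
      calc Ψ w = ∫ z, gclip (Real.sqrt w) z ∂(gaussianReal 0 1) := hΨ w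
        _ = w / 2 - 2 * Real.sqrt w * phi (2 / Real.sqrt w)
            + (4 - w) * Qf (2 / Real.sqrt w) := closed_form w hw'
        _ = Gf w := rfl
    have hev : Ψ =ᶠ[nhds v] Gf := Filter.eventuallyEq_of_mem (Ioi_mem_nhds hv) heq
    rw [hev.deriv_eq, (hasDerivAt_Gf v hv).deriv]
  constructor
  · intro v hv
    rw [hderiv v hv]
    have h1 := Qf_nonneg (2 / Real.sqrt v)
    have hs0 : 0 < Real.sqrt v := Real.sqrt_pos.mpr hv
    have h2 : 0 ≤ 2 * phi (2 / Real.sqrt v) / Real.sqrt v :=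
      div_nonneg (mul_nonneg (by norm_num) (phi_nonneg _)) hs0.le
    linarith
  · have hf : Tendsto (fun v : ℝ => 1 / 2 - Qf (2 / Real.sqrt v)
        - 2 * phi (2 / Real.sqrt v) / Real.sqrt v)
        (nhdsWithin 0 (Set.Ioi 0)) (nhds (1 / 2)) := by
      have h := ((tendsto_const_nhds (x := (1:ℝ)/2)
        (f := nhdsWithin 0 (Set.Ioi 0))).sub tendsto_Q_term).sub tendsto_phi_term
      simpa using h
    refine hf.congr' ?_
    filter_upwards [self_mem_nhdsWithin] with v hv
    exact (hderiv v hv).symm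
end

section
/- Let M ≥ 2 be even and S₀ uniform on {±1, ±3, ..., ±(M-1)}, α = M-1, and Ψ^PAM as before. For every N₀ > 0 and every 0 ≤ β ≤ (1 - 1/M)^{-1}, the fixed-point equation σ² = N₀ + β·Ψ^PAM(σ²) has a unique positive solution. -/
open ProbabilityTheory MeasureTheory Real Set Filter
open scoped ENNReal NNReal



noncomputable def phiG (x : ℝ) : ℝ := Real.exp (-(2⁻¹:ℝ) * x^2)

lemma phiG_int : Integrable phiG := integrable_exp_neg_mul_sq (by norm_num)

lemma phiG_sq_int : Integrable (fun x : ℝ => x^2 * phiG x) := by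
  have h := integrable_rpow_mul_exp_neg_mul_sq (b := (2⁻¹:ℝ)) (by norm_num) (s := 2) (by norm_num)
  have : (fun x : ℝ => x ^ (2:ℝ) * Real.exp (-(2⁻¹:ℝ) * x ^ 2))
      = fun x : ℝ => x^2 * phiG x := by
    funext x
    rw [show ((2:ℝ) = ((2:ℕ):ℝ)) by norm_num, Real.rpow_natCast]
    rfl
  rwa [this] at h

lemma phiG_tot : ∫ x, phiG x = Real.sqrt (2 * Real.pi) := by
  have h := integral_gaussian (2⁻¹:ℝ)
  rw [show Real.pi / (2⁻¹:ℝ) = 2 * Real.pi by ring] at h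
  exact h

lemma phiG_Ioi : ∫ x in Ioi (0:ℝ), phiG x = Real.sqrt (2 * Real.pi) / 2 := by
  have h := integral_gaussian_Ioi (2⁻¹:ℝ)
  rw [show Real.pi / (2⁻¹:ℝ) = 2 * Real.pi by ring] at h
  exact h

lemma phiG_Iic : ∫ x in Iic (0:ℝ), phiG x = Real.sqrt (2 * Real.pi) / 2 := by
  have hsplit : (∫ x in Iic (0:ℝ), phiG x) + ∫ x in Ioi (0:ℝ), phiG x = ∫ x, phiG x := by
    rw [← setIntegral_union (Set.Iic_disjoint_Ioi le_rfl) measurableSet_Ioi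
      phiG_int.integrableOn phiG_int.integrableOn, Set.Iic_union_Ioi,
      setIntegral_univ]
  rw [phiG_Ioi, phiG_tot] at hsplit
  linarith


noncomputable def FG (x : ℝ) : ℝ := -x * phiG x

lemma FG_deriv (x : ℝ) : HasDerivAt FG ((x^2 - 1) * phiG x) x := by
  have h1 : HasDerivAt (fun x : ℝ => -(2⁻¹:ℝ) * x^2) (-(2⁻¹:ℝ) * (2*x)) x := by
    simpa using ((hasDerivAt_pow 2 x).const_mul (-(2⁻¹:ℝ)))
  have h2 : HasDerivAt phiG (Real.exp (-(2⁻¹:ℝ) * x^2) * (-(2⁻¹:ℝ) * (2*x))) x := h1.exp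
  have h3 : HasDerivAt (fun x : ℝ => -x) (-1) x := by simpa using hasDerivAt_neg x
  have : HasDerivAt (fun y : ℝ => -y * phiG y) _ x := h3.mul h2
  show HasDerivAt (fun y : ℝ => -y * phiG y) ((x^2 - 1) * phiG x) x
  convert this using 1
  simp only [phiG]
  ring

lemma FG_tendsto_atTop : Tendsto FG atTop (nhds 0) := by
  have h := rpow_mul_exp_neg_mul_sq_isLittleO_exp_neg (b := (2⁻¹:ℝ)) (by norm_num) 1
  have h2 : Tendsto (fun x : ℝ => x ^ (1:ℝ) * Real.exp (-(2⁻¹:ℝ) * x^2)) atTop (nhds 0) :=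
    h.trans_tendsto (Real.tendsto_exp_atBot.comp
      ((tendsto_const_mul_atBot_of_neg (by norm_num : (-(1/2):ℝ) < 0)).mpr tendsto_id))
  have h3 : Tendsto (fun x : ℝ => x * phiG x) atTop (nhds 0) := by
    simpa [Real.rpow_one, phiG] using h2
  have h4 : Tendsto (fun x : ℝ => -(x * phiG x)) atTop (nhds 0) := by simpa using h3.neg
  exact h4.congr fun x => (neg_mul x (phiG x)).symm

lemma FG_tendsto_atBot : Tendsto FG atBot (nhds 0) := by
  have h := rpow_mul_exp_neg_mul_sq_isLittleO_exp_neg (b := (2⁻¹:ℝ)) (by norm_num) 1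
  have h2 : Tendsto (fun x : ℝ => x ^ (1:ℝ) * Real.exp (-(2⁻¹:ℝ) * x^2)) atTop (nhds 0) :=
    h.trans_tendsto (Real.tendsto_exp_atBot.comp
      ((tendsto_const_mul_atBot_of_neg (by norm_num : (-(1/2):ℝ) < 0)).mpr tendsto_id))
  have h3 : Tendsto (fun x : ℝ => x * phiG x) atTop (nhds 0) := by
    simpa [Real.rpow_one, phiG] using h2
  have h4 : Tendsto (fun x : ℝ => FG (-x)) atTop (nhds 0) := by
    have : (fun x : ℝ => FG (-x)) = fun x : ℝ => x * phiG x := by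
      funext x; simp [FG, phiG]
    rw [this]; exact h3
  have h5 := h4.comp tendsto_neg_atBot_atTop
  exact h5.congr fun x => by simp

lemma FG'_int : Integrable (fun x : ℝ => (x^2 - 1) * phiG x) := by
  have := phiG_sq_int.sub phiG_int
  refine this.congr ?_
  filter_upwards with x
  simp only [Pi.sub_apply]
  ring

lemma sqphi_Ioi : ∫ x in Ioi (0:ℝ), x^2 * phiG x = Real.sqrt (2 * Real.pi) / 2 := by
  have hparts : ∫ x in Ioi (0:ℝ), (x^2 - 1) * phiG x = 0 - FG 0 :=
    integral_Ioi_of_hasDerivAt_of_tendsto' (fun x _ => FG_deriv x)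
      FG'_int.integrableOn FG_tendsto_atTop
  have hF0 : FG 0 = 0 := by simp [FG]
  have hsub : ∫ x in Ioi (0:ℝ), (x^2 - 1) * phiG x
      = (∫ x in Ioi (0:ℝ), x^2 * phiG x) - ∫ x in Ioi (0:ℝ), phiG x := by
    rw [← integral_sub phiG_sq_int.integrableOn phiG_int.integrableOn]
    congr 1; funext x; ring
  rw [hsub, hF0, phiG_Ioi] at hparts
  linarith [hparts]

lemma sqphi_Iic : ∫ x in Iic (0:ℝ), x^2 * phiG x = Real.sqrt (2 * Real.pi) / 2 := by
  have hparts : ∫ x in Iic (0:ℝ), (x^2 - 1) * phiG x = FG 0 - 0 :=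
    integral_Iic_of_hasDerivAt_of_tendsto' (fun x _ => FG_deriv x)
      FG'_int.integrableOn FG_tendsto_atBot
  have hF0 : FG 0 = 0 := by simp [FG]
  have hsub : ∫ x in Iic (0:ℝ), (x^2 - 1) * phiG x
      = (∫ x in Iic (0:ℝ), x^2 * phiG x) - ∫ x in Iic (0:ℝ), phiG x := by
    rw [← integral_sub phiG_sq_int.integrableOn phiG_int.integrableOn]
    congr 1; funext x; ring
  rw [hsub, hF0, phiG_Iic] at hparts
  linarith [hparts]

lemma sqphi_tot : ∫ x, x^2 * phiG x = Real.sqrt (2 * Real.pi) := by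
  have hsplit : (∫ x in Iic (0:ℝ), x^2 * phiG x) + ∫ x in Ioi (0:ℝ), x^2 * phiG x
      = ∫ x, x^2 * phiG x := by
    rw [← setIntegral_union (Set.Iic_disjoint_Ioi le_rfl) measurableSet_Ioi
      phiG_sq_int.integrableOn phiG_sq_int.integrableOn, Set.Iic_union_Ioi,
      setIntegral_univ]
  rw [sqphi_Iic, sqphi_Ioi] at hsplit
  linarith


lemma pdf_eq (x : ℝ) : gaussianPDFReal 0 1 x = (Real.sqrt (2 * Real.pi))⁻¹ * phiG x := by
  simp only [gaussianPDFReal, phiG, NNReal.coe_one, mul_one, sub_zero]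
  congr 1
  ring

lemma gauss_setInt (g : ℝ → ℝ) {s : Set ℝ} (hs : MeasurableSet s) :
    ∫ x in s, g x ∂(gaussianReal 0 1)
      = (Real.sqrt (2 * Real.pi))⁻¹ * ∫ x in s, g x * phiG x := by
  rw [gaussianReal_of_var_ne_zero 0 one_ne_zero, restrict_withDensity hs]
  have hmeas : Measurable fun x => (gaussianPDFReal 0 1 x).toNNReal :=
    (measurable_gaussianPDFReal 0 1).real_toNNReal
  have : (gaussianPDF 0 1) = fun x => ((gaussianPDFReal 0 1 x).toNNReal : ℝ≥0∞) := rfl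
  rw [this, integral_withDensity_eq_integral_smul hmeas]
  rw [← integral_const_mul]
  congr 1
  funext x
  rw [NNReal.smul_def, smul_eq_mul, Real.coe_toNNReal _ (gaussianPDFReal_nonneg 0 1 x), pdf_eq]
  ring

lemma gauss_int (g : ℝ → ℝ) :
    ∫ x, g x ∂(gaussianReal 0 1)
      = (Real.sqrt (2 * Real.pi))⁻¹ * ∫ x, g x * phiG x := by
  rw [← setIntegral_univ (μ := gaussianReal 0 1), gauss_setInt g MeasurableSet.univ,
    setIntegral_univ]

lemma sqrt2pi_pos : (0:ℝ) < Real.sqrt (2 * Real.pi) :=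
  Real.sqrt_pos.mpr (by positivity)

lemma gauss_sq_tot : ∫ z, z^2 ∂(gaussianReal 0 1) = 1 := by
  rw [gauss_int (fun z => z^2), sqphi_tot, inv_mul_cancel₀ sqrt2pi_pos.ne']

lemma gauss_sq_Ioi : ∫ z in Ioi (0:ℝ), z^2 ∂(gaussianReal 0 1) = 1/2 := by
  rw [gauss_setInt (fun z => z^2) measurableSet_Ioi, sqphi_Ioi]
  field_simp

lemma gauss_sq_Iio : ∫ z in Iio (0:ℝ), z^2 ∂(gaussianReal 0 1) = 1/2 := by
  rw [gauss_setInt (fun z => z^2) measurableSet_Iio]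
  have : ∫ x in Iio (0:ℝ), x^2 * phiG x = ∫ x in Iic (0:ℝ), x^2 * phiG x :=
    setIntegral_congr_set Iio_ae_eq_Iic
  rw [this, sqphi_Iic]
  field_simp

lemma gauss_sq_integrable : Integrable (fun z : ℝ => z^2) (gaussianReal 0 1) := by
  rw [gaussianReal_of_var_ne_zero 0 one_ne_zero]
  have hmeas : Measurable fun x => (gaussianPDFReal 0 1 x).toNNReal :=
    (measurable_gaussianPDFReal 0 1).real_toNNReal
  have : (gaussianPDF 0 1) = fun x => ((gaussianPDFReal 0 1 x).toNNReal : ℝ≥0∞) := rfl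
  rw [this, integrable_withDensity_iff_integrable_smul hmeas]
  have : Integrable (fun x : ℝ => (Real.sqrt (2 * Real.pi))⁻¹ * (x^2 * phiG x)) :=
    phiG_sq_int.const_mul _
  refine this.congr ?_
  filter_upwards with x
  rw [NNReal.smul_def, smul_eq_mul, Real.coe_toNNReal _ (gaussianPDFReal_nonneg 0 1 x), pdf_eq]
  ring

lemma gauss_sq_Iic_pos (T : ℝ) (hT : 0 < T) :
    0 < ∫ z in Iic (-T), z^2 ∂(gaussianReal 0 1) := by
  rw [gauss_setInt (fun z => z^2) measurableSet_Iic]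
  have hpos : 0 < ∫ x in Iic (-T), x^2 * phiG x := by
    rw [setIntegral_pos_iff_support_of_nonneg_ae]
    · have hsub : Iic (-T) ⊆ Function.support (fun x : ℝ => x^2 * phiG x) ∩ Iic (-T) := by
        intro x hx
        refine ⟨?_, hx⟩
        have hx0 : x ≠ 0 := by
          intro h; rw [h] at hx; simp at hx; linarith
        simp only [Function.mem_support, phiG]
        positivity
      refine lt_of_lt_of_le ?_ (measure_mono hsub)
      rw [Real.volume_Iic]
      exact ENNReal.zero_lt_top
    · filter_upwards with x
      have : 0 ≤ phiG x := le_of_lt (Real.exp_pos _)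
      positivity
    · exact phiG_sq_int.integrableOn
  positivity


lemma clip_mem {α w : ℝ} (hα : 0 ≤ α) :
    -α ≤ max (-α) (min α w) ∧ max (-α) (min α w) ≤ α :=
  ⟨le_max_left _ _, max_le (by linarith) (min_le_left _ _)⟩

lemma clip_sq_nonneg (α s w : ℝ) : 0 ≤ (max (-α) (min α w) - s)^2 := sq_nonneg _

lemma clip_sq_le {α s : ℝ} (hα : 0 ≤ α) (hs1 : -α ≤ s) (hs2 : s ≤ α) (w : ℝ) :
    (max (-α) (min α w) - s)^2 ≤ (2*α)^2 := by
  obtain ⟨h1, h2⟩ := clip_mem (w := w) hα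
  nlinarith [sq_nonneg (max (-α) (min α w) - s)]

lemma clip_diff_le {α s t1 t2 : ℝ} (hα : 0 ≤ α) (hs1 : -α ≤ s) (hs2 : s ≤ α)
    (ht1 : 0 ≤ t1) (ht : t1 ≤ t2) (z : ℝ) :
    (max (-α) (min α (s + t2*z)) - s)^2 - (max (-α) (min α (s + t1*z)) - s)^2
      ≤ (t2^2 - t1^2) * z^2 := by
  have ht2 : 0 ≤ t2 := le_trans ht1 ht
  rcases le_total 0 z with hz | hz
  · have e0 : 0 ≤ t1 * z := mul_nonneg ht1 hz
    have e1 : t1 * z ≤ t2 * z := mul_le_mul_of_nonneg_right ht hz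
    have m2 : max (-α) (min α (s + t2*z)) = min α (s + t2*z) :=
      max_eq_right (le_min (by linarith) (by linarith))
    have m1 : max (-α) (min α (s + t1*z)) = min α (s + t1*z) :=
      max_eq_right (le_min (by linarith) (by linarith))
    rw [m1, m2]
    rcases le_total (s + t2*z) α with h2 | h2 <;> rcases le_total (s + t1*z) α with h1 | h1
    · rw [min_eq_right h2, min_eq_right h1]; nlinarith
    · rw [min_eq_right h2, min_eq_left h1]; nlinarith
    · rw [min_eq_left h2, min_eq_right h1]
      nlinarith [mul_nonneg (sub_nonneg.2 h2) (by linarith : (0:ℝ) ≤ t2*z + (α - s))]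
    · rw [min_eq_left h2, min_eq_left h1]; nlinarith
  · have e0 : t1 * z ≤ 0 := mul_nonpos_of_nonneg_of_nonpos ht1 hz
    have e1 : t2 * z ≤ t1 * z := mul_le_mul_of_nonpos_right ht hz
    have m2 : min α (s + t2*z) = s + t2*z := min_eq_right (by linarith)
    have m1 : min α (s + t1*z) = s + t1*z := min_eq_right (by linarith)
    rw [m1, m2]
    rcases le_total (-α) (s + t2*z) with h2 | h2 <;> rcases le_total (-α) (s + t1*z) with h1 | h1
    · rw [max_eq_right h2, max_eq_right h1]; nlinarith
    · rw [max_eq_right h2, max_eq_left h1]; nlinarith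
    · rw [max_eq_left h2, max_eq_right h1]
      nlinarith [mul_nonneg (by linarith : (0:ℝ) ≤ -(t2*z) - (α + s))
        (by linarith : (0:ℝ) ≤ -(t2*z) + (α + s))]
    · rw [max_eq_left h2, max_eq_left h1]; nlinarith

lemma clip_zero_right {α t z : ℝ} (hα : 0 ≤ α) (ht : 0 ≤ t) (hz : 0 ≤ z) :
    (max (-α) (min α (α + t*z)) - α)^2 = 0 := by
  have h0 : 0 ≤ t * z := mul_nonneg ht hz
  rw [min_eq_left (by linarith), max_eq_right (by linarith)]
  ring

lemma clip_zero_left {α t z : ℝ} (hα : 0 ≤ α) (ht : 0 ≤ t) (hz : z ≤ 0) :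
    (max (-α) (min α (-α + t*z)) - (-α))^2 = 0 := by
  have h0 : t * z ≤ 0 := mul_nonpos_of_nonneg_of_nonpos ht hz
  rw [min_eq_right (by linarith), max_eq_left (by linarith)]
  ring

lemma clip_sat {α t z : ℝ} (hα : 0 ≤ α) (h : t*z ≤ -(2*α)) :
    (max (-α) (min α (α + t*z)) - α)^2 = (2*α)^2 := by
  rw [min_eq_right (by linarith), max_eq_left (by linarith)]
  ring


noncomputable def EE (α s t z : ℝ) : ℝ := (max (-α) (min α (s + t*z)) - s)^2

lemma EE_nonneg (α s t z : ℝ) : 0 ≤ EE α s t z := sq_nonneg _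

lemma EE_cont_z (α s t : ℝ) : Continuous (fun z => EE α s t z) := by
  unfold EE; fun_prop

lemma EE_cont_v (α s z : ℝ) : Continuous (fun v => EE α s (Real.sqrt v) z) := by
  unfold EE; fun_prop

lemma EE_integrable {α s : ℝ} (hα : 0 ≤ α) (hs1 : -α ≤ s) (hs2 : s ≤ α) (t : ℝ) :
    Integrable (fun z => EE α s t z) (gaussianReal 0 1) := by
  refine (integrable_const ((2*α)^2)).mono' (EE_cont_z α s t).aestronglyMeasurable ?_
  filter_upwards with z
  rw [Real.norm_eq_abs, abs_of_nonneg (EE_nonneg α s t z)]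
  exact clip_sq_le hα hs1 hs2 _

lemma EE_int_nonneg {α s : ℝ} (t : ℝ) :
    0 ≤ ∫ z, EE α s t z ∂(gaussianReal 0 1) :=
  integral_nonneg (fun z => EE_nonneg α s t z)

lemma EE_int_le {α s : ℝ} (hα : 0 ≤ α) (hs1 : -α ≤ s) (hs2 : s ≤ α) (t : ℝ) :
    ∫ z, EE α s t z ∂(gaussianReal 0 1) ≤ (2*α)^2 := by
  calc ∫ z, EE α s t z ∂(gaussianReal 0 1)
      ≤ ∫ _z, (2*α)^2 ∂(gaussianReal 0 1) :=
        integral_mono (EE_integrable hα hs1 hs2 t) (integrable_const _)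
          (fun z => clip_sq_le hα hs1 hs2 _)
    _ = (2*α)^2 := by simp

lemma term_le {α s t1 t2 : ℝ} (hα : 0 ≤ α) (hs1 : -α ≤ s) (hs2 : s ≤ α)
    (ht1 : 0 ≤ t1) (ht : t1 ≤ t2) :
    (∫ z, EE α s t2 z ∂(gaussianReal 0 1)) - (∫ z, EE α s t1 z ∂(gaussianReal 0 1))
      ≤ t2^2 - t1^2 := by
  rw [← integral_sub (EE_integrable hα hs1 hs2 t2) (EE_integrable hα hs1 hs2 t1)]
  calc ∫ z, EE α s t2 z - EE α s t1 z ∂(gaussianReal 0 1)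
      ≤ ∫ z, (t2^2 - t1^2) * z^2 ∂(gaussianReal 0 1) :=
        integral_mono ((EE_integrable hα hs1 hs2 t2).sub (EE_integrable hα hs1 hs2 t1))
          (gauss_sq_integrable.const_mul _) (fun z => clip_diff_le hα hs1 hs2 ht1 ht z)
    _ = t2^2 - t1^2 := by rw [integral_const_mul, gauss_sq_tot, mul_one]

lemma term0_le {α t1 t2 : ℝ} (hα : 0 ≤ α) (ht1 : 0 ≤ t1) (ht : t1 ≤ t2) :
    (∫ z, EE α (-α) t2 z ∂(gaussianReal 0 1)) - (∫ z, EE α (-α) t1 z ∂(gaussianReal 0 1))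
      ≤ (t2^2 - t1^2) * (1/2) := by
  have hs1 : -α ≤ -α := le_refl _
  have hs2 : -α ≤ α := by linarith
  have ht2 : 0 ≤ t2 := le_trans ht1 ht
  rw [← integral_sub (EE_integrable hα hs1 hs2 t2) (EE_integrable hα hs1 hs2 t1)]
  have hind : (fun z => EE α (-α) t2 z - EE α (-α) t1 z)
      = Set.indicator (Ioi (0:ℝ)) (fun z => EE α (-α) t2 z - EE α (-α) t1 z) := by
    funext z
    rcases lt_or_ge 0 z with hz | hz
    · rw [Set.indicator_of_mem (mem_Ioi.2 hz)]
    · rw [Set.indicator_of_notMem (by simpa using hz)]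
      have h2 := clip_zero_left (t := t2) hα ht2 hz
      have h1 := clip_zero_left (t := t1) hα ht1 hz
      simp only [EE, h1, h2, sub_zero]
  rw [hind, integral_indicator measurableSet_Ioi]
  calc ∫ z in Ioi (0:ℝ), (EE α (-α) t2 z - EE α (-α) t1 z) ∂(gaussianReal 0 1)
      ≤ ∫ z in Ioi (0:ℝ), (t2^2 - t1^2) * z^2 ∂(gaussianReal 0 1) :=
        setIntegral_mono_on
          (((EE_integrable hα hs1 hs2 t2).sub (EE_integrable hα hs1 hs2 t1)).integrableOn)
          ((gauss_sq_integrable.const_mul _).integrableOn) measurableSet_Ioi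
          (fun z _ => clip_diff_le hα hs1 hs2 ht1 ht z)
    _ = (t2^2 - t1^2) * (1/2) := by rw [integral_const_mul, gauss_sq_Ioi]

lemma termTop_le {α t1 t2 : ℝ} (hα : 0 < α) (ht1 : 0 < t1) (ht : t1 ≤ t2) :
    (∫ z, EE α α t2 z ∂(gaussianReal 0 1)) - (∫ z, EE α α t1 z ∂(gaussianReal 0 1))
      ≤ (t2^2 - t1^2) * (1/2 - ∫ z in Iic (-(2*α/t1)), z^2 ∂(gaussianReal 0 1)) := by
  have hα' : 0 ≤ α := hα.le
  have hs1 : -α ≤ α := by linarith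
  have hs2 : α ≤ α := le_refl _
  have ht2 : 0 ≤ t2 := le_trans ht1.le ht
  set T0 : ℝ := 2*α/t1 with hT0def
  have hT0 : 0 < T0 := by positivity
  rw [← integral_sub (EE_integrable hα' hs1 hs2 t2) (EE_integrable hα' hs1 hs2 t1)]
  have hind : (fun z => EE α α t2 z - EE α α t1 z)
      = Set.indicator (Ioo (-T0) (0:ℝ)) (fun z => EE α α t2 z - EE α α t1 z) := by
    funext z
    by_cases hz : z ∈ Ioo (-T0) (0:ℝ)
    · rw [Set.indicator_of_mem hz]
    · rw [Set.indicator_of_notMem hz]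
      rw [mem_Ioo, not_and_or] at hz
      rcases hz with hz | hz
      · push_neg at hz
        have hzneg : z ≤ 0 := by linarith
        have h1z : t1 * z ≤ -(2*α) := by
          have : t1 * z ≤ t1 * (-T0) := mul_le_mul_of_nonneg_left hz ht1.le
          calc t1 * z ≤ t1 * (-T0) := this
            _ = -(2*α) := by
                rw [hT0def]
                field_simp
        have h2z : t2 * z ≤ -(2*α) := by
          have : t2 * z ≤ t1 * z := mul_le_mul_of_nonpos_right ht hzneg
          linarith
        simp only [EE, clip_sat hα' h1z, clip_sat hα' h2z, sub_self]
      · push_neg at hz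
        simp only [EE, clip_zero_right hα' ht2 hz, clip_zero_right hα' ht1.le hz, sub_self]
  rw [hind, integral_indicator measurableSet_Ioo]
  have hioo : ∫ z in Ioo (-T0) (0:ℝ), z^2 ∂(gaussianReal 0 1)
      = 1/2 - ∫ z in Iic (-T0), z^2 ∂(gaussianReal 0 1) := by
    have hunion : Iic (-T0) ∪ Ioo (-T0) (0:ℝ) = Iio (0:ℝ) := by
      ext x
      simp only [mem_union, mem_Iic, mem_Ioo, mem_Iio]
      constructor
      · rintro (h | ⟨h1, h2⟩)
        · linarith
        · exact h2
      · intro h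
        rcases le_or_gt x (-T0) with hx | hx
        · exact Or.inl hx
        · exact Or.inr ⟨hx, h⟩
    have hdisj : Disjoint (Iic (-T0)) (Ioo (-T0) (0:ℝ)) :=
      Set.disjoint_left.mpr (fun x h1 h2 => absurd h2.1 (not_lt.2 h1))
    have := setIntegral_union hdisj measurableSet_Ioo
      (gauss_sq_integrable.integrableOn (s := Iic (-T0)))
      (gauss_sq_integrable.integrableOn (s := Ioo (-T0) (0:ℝ))) (f := fun z => z^2)
    rw [hunion, gauss_sq_Iio] at this
    linarith
  calc ∫ z in Ioo (-T0) (0:ℝ), (EE α α t2 z - EE α α t1 z) ∂(gaussianReal 0 1)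
      ≤ ∫ z in Ioo (-T0) (0:ℝ), (t2^2 - t1^2) * z^2 ∂(gaussianReal 0 1) :=
        setIntegral_mono_on
          (((EE_integrable hα' hs1 hs2 t2).sub (EE_integrable hα' hs1 hs2 t1)).integrableOn)
          ((gauss_sq_integrable.const_mul _).integrableOn) measurableSet_Ioo
          (fun z _ => clip_diff_le hα' hs1 hs2 ht1.le ht z)
    _ = (t2^2 - t1^2) * (1/2 - ∫ z in Iic (-T0), z^2 ∂(gaussianReal 0 1)) := by
        rw [integral_const_mul, hioo]


lemma EE_int_cont {α s : ℝ} (hα : 0 ≤ α) (hs1 : -α ≤ s) (hs2 : s ≤ α) :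
    Continuous (fun v => ∫ z, EE α s (Real.sqrt v) z ∂(gaussianReal 0 1)) := by
  apply continuous_of_dominated (bound := fun _ => (2*α)^2)
  · intro v; exact (EE_cont_z _ _ _).aestronglyMeasurable
  · intro v
    filter_upwards with z
    rw [Real.norm_eq_abs, abs_of_nonneg (EE_nonneg _ _ _ _)]
    exact clip_sq_le hα hs1 hs2 _
  · exact integrable_const _
  · filter_upwards with z
    exact EE_cont_v α s z

/-- Lemma 6: for M-PAM (M even, M ≥ 2) and the clipping-denoiser MSE Ψ^PAM, the
fixed-point equation σ² = N₀ + β·Ψ^PAM(σ²) has a unique positive solution for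
every N₀ > 0 and every 0 ≤ β ≤ (1-1/M)⁻¹, regardless of N₀. -/
theorem stmt_12 (M : ℕ) (hM : 2 ≤ M) (hMeven : Even M)
    (Ψ : ℝ → ℝ)
    (hΨ : ∀ v, Ψ v = (1 / (M : ℝ)) * ∑ k ∈ Finset.range M,
      ∫ z, (max (-(M - 1) : ℝ) (min ((M : ℝ) - 1)
            ((2 * (k : ℝ) + 1 - M) + Real.sqrt v * z)) - (2 * (k : ℝ) + 1 - M)) ^ 2
          ∂(gaussianReal 0 1))
    (N0 β : ℝ) (hN0 : 0 < N0) (hβ0 : 0 ≤ β) (hβ : β ≤ (1 - 1 / (M : ℝ))⁻¹) :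
    ∃! v : ℝ, 0 < v ∧ v = N0 + β * Ψ v := by
  have hMR : (2:ℝ) ≤ (M:ℝ) := by exact_mod_cast hM
  have hMpos : (0:ℝ) < (M:ℝ) := by linarith
  have hα0 : (0:ℝ) < (M:ℝ) - 1 := by linarith
  have hα : (0:ℝ) ≤ (M:ℝ) - 1 := hα0.le
  have hψ : ∀ v, Ψ v = (1/(M:ℝ)) * ∑ k ∈ Finset.range M,
      ∫ z, EE ((M:ℝ)-1) (2*(k:ℝ)+1-(M:ℝ)) (Real.sqrt v) z ∂(gaussianReal 0 1) :=
    fun v => hΨ v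
  have hsb : ∀ k, k ∈ Finset.range M →
      -((M:ℝ)-1) ≤ 2*(k:ℝ)+1-(M:ℝ) ∧ 2*(k:ℝ)+1-(M:ℝ) ≤ (M:ℝ)-1 := by
    intro k hk
    have hk' : (k:ℝ) + 1 ≤ (M:ℝ) := by exact_mod_cast Finset.mem_range.1 hk
    have hk0 : (0:ℝ) ≤ (k:ℝ) := Nat.cast_nonneg k
    exact ⟨by linarith, by linarith⟩
  -- continuity
  have hcont : Continuous Ψ := by
    have hfe : Ψ = fun v => (1/(M:ℝ)) * ∑ k ∈ Finset.range M,
        ∫ z, EE ((M:ℝ)-1) (2*(k:ℝ)+1-(M:ℝ)) (Real.sqrt v) z ∂(gaussianReal 0 1) :=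
      funext hψ
    rw [hfe]
    exact continuous_const.mul (continuous_finset_sum _ (fun k hk =>
      EE_int_cont hα (hsb k hk).1 (hsb k hk).2))
  -- nonnegativity
  have hnn : ∀ v, 0 ≤ Ψ v := by
    intro v
    rw [hψ v]
    exact mul_nonneg (by positivity)
      (Finset.sum_nonneg (fun k _ => EE_int_nonneg _))
  -- upper bound
  have hub : ∀ v, Ψ v ≤ (2*((M:ℝ)-1))^2 := by
    intro v
    rw [hψ v]
    have hsum := Finset.sum_le_card_nsmul (Finset.range M)
      (fun k => ∫ z, EE ((M:ℝ)-1) (2*(k:ℝ)+1-(M:ℝ)) (Real.sqrt v) z ∂(gaussianReal 0 1))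
      ((2*((M:ℝ)-1))^2) (fun k hk => EE_int_le hα (hsb k hk).1 (hsb k hk).2 _)
    rw [Finset.card_range, nsmul_eq_mul] at hsum
    calc (1/(M:ℝ)) * ∑ k ∈ Finset.range M,
        ∫ z, EE ((M:ℝ)-1) (2*(k:ℝ)+1-(M:ℝ)) (Real.sqrt v) z ∂(gaussianReal 0 1)
        ≤ (1/(M:ℝ)) * ((M:ℝ) * (2*((M:ℝ)-1))^2) := by
          apply mul_le_mul_of_nonneg_left hsum (by positivity)
      _ = (2*((M:ℝ)-1))^2 := by field_simp
  -- key strict decrease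
  have hkey : ∀ v1 v2, 0 < v1 → v1 < v2 → Ψ v2 - Ψ v1 < (1 - 1/(M:ℝ)) * (v2 - v1) := by
    intro v1 v2 h1 h12
    have ht1 : 0 < Real.sqrt v1 := Real.sqrt_pos.2 h1
    have ht12 : Real.sqrt v1 ≤ Real.sqrt v2 := Real.sqrt_le_sqrt h12.le
    have hsq1 : (Real.sqrt v1)^2 = v1 := Real.sq_sqrt h1.le
    have hsq2 : (Real.sqrt v2)^2 = v2 := Real.sq_sqrt (by linarith)
    set ρ : ℝ := ∫ z in Iic (-(2*((M:ℝ)-1)/Real.sqrt v1)), z^2 ∂(gaussianReal 0 1) with hρdef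
    have hρ : 0 < ρ := gauss_sq_Iic_pos _ (by positivity)
    set d : ℕ → ℝ := fun k =>
      (∫ z, EE ((M:ℝ)-1) (2*(k:ℝ)+1-(M:ℝ)) (Real.sqrt v2) z ∂(gaussianReal 0 1))
        - (∫ z, EE ((M:ℝ)-1) (2*(k:ℝ)+1-(M:ℝ)) (Real.sqrt v1) z ∂(gaussianReal 0 1)) with hd
    have hdall : ∀ k ∈ Finset.range M, d k ≤ v2 - v1 := by
      intro k hk
      have := term_le hα (hsb k hk).1 (hsb k hk).2 ht1.le ht12
      rw [hsq1, hsq2] at this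
      exact this
    have hd0 : d 0 ≤ (v2-v1) * (1/2) := by
      have hs0 : (2*((0:ℕ):ℝ)+1-(M:ℝ)) = -((M:ℝ)-1) := by push_cast; ring
      have h := term0_le (α := (M:ℝ)-1) hα ht1.le ht12
      rw [hsq1, hsq2] at h
      rw [hd]
      simp only [hs0]
      exact h
    have hdM : d (M-1) ≤ (v2-v1) * (1/2 - ρ) := by
      have hsM : (2*(((M-1:ℕ)):ℝ)+1-(M:ℝ)) = (M:ℝ)-1 := by
        push_cast [Nat.cast_sub (by omega : 1 ≤ M)]
        ring
      have h := termTop_le (α := (M:ℝ)-1) hα0 ht1 ht12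
      rw [hsq1, hsq2, ← hρdef] at h
      rw [hd]
      simp only [hsM]
      exact h
    have hmem : M-1 ∈ Finset.range M := Finset.mem_range.2 (by omega)
    have h0mem : 0 ∈ (Finset.range M).erase (M-1) :=
      Finset.mem_erase.2 ⟨by omega, Finset.mem_range.2 (by omega)⟩
    have hsplit : ∑ k ∈ Finset.range M, d k
        = d (M-1) + (d 0 + ∑ k ∈ ((Finset.range M).erase (M-1)).erase 0, d k) := by
      rw [Finset.add_sum_erase _ d h0mem, Finset.add_sum_erase _ d hmem]
    have hrest : ∑ k ∈ ((Finset.range M).erase (M-1)).erase 0, d k ≤ ((M:ℝ)-2) * (v2-v1) := by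
      have hcard : (((Finset.range M).erase (M-1)).erase 0).card = M-2 := by
        rw [Finset.card_erase_of_mem h0mem, Finset.card_erase_of_mem hmem, Finset.card_range]
        omega
      have h := Finset.sum_le_card_nsmul (((Finset.range M).erase (M-1)).erase 0) d (v2-v1)
        (fun k hk => hdall k (Finset.mem_of_mem_erase (Finset.mem_of_mem_erase hk)))
      rw [hcard, nsmul_eq_mul] at h
      have hcast : ((M-2:ℕ):ℝ) = (M:ℝ)-2 := by
        push_cast [Nat.cast_sub hM]
        ring
      rw [hcast] at h
      exact h
    have hsum : ∑ k ∈ Finset.range M, d k ≤ ((M:ℝ)-1)*(v2-v1) - ρ*(v2-v1) := by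
      have e2 : ((M:ℝ)-1)*(v2-v1) - ρ*(v2-v1)
          = (v2-v1)*(1/2-ρ) + ((v2-v1)*(1/2) + ((M:ℝ)-2)*(v2-v1)) := by ring
      rw [hsplit, e2]
      exact add_le_add hdM (add_le_add hd0 hrest)
    have hΨdiff : Ψ v2 - Ψ v1 = (1/(M:ℝ)) * ∑ k ∈ Finset.range M, d k := by
      rw [hψ v1, hψ v2, ← mul_sub, ← Finset.sum_sub_distrib]
    rw [hΨdiff]
    have hexp : (1/(M:ℝ)) * (((M:ℝ)-1)*(v2-v1) - ρ*(v2-v1))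
        = (1/(M:ℝ)) * (((M:ℝ)-1)*(v2-v1)) - (1/(M:ℝ)) * (ρ*(v2-v1)) := by ring
    have h1M : (1/(M:ℝ)) * (((M:ℝ)-1)*(v2-v1)) = (1-1/(M:ℝ))*(v2-v1) := by
      field_simp
    have hpos : 0 < (1/(M:ℝ)) * (ρ*(v2-v1)) := by
      have : 0 < v2 - v1 := by linarith
      positivity
    calc (1/(M:ℝ)) * ∑ k ∈ Finset.range M, d k
        ≤ (1/(M:ℝ)) * (((M:ℝ)-1)*(v2-v1) - ρ*(v2-v1)) :=
          mul_le_mul_of_nonneg_left hsum (by positivity)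
      _ < (1 - 1/(M:ℝ))*(v2-v1) := by rw [hexp, h1M]; linarith
  -- existence via IVT
  set B : ℝ := N0 + β * (2*((M:ℝ)-1))^2 with hB
  have hB0 : (0:ℝ) ≤ B := by
    have : 0 ≤ β * (2*((M:ℝ)-1))^2 := by positivity
    linarith
  have hg : Continuous (fun v => N0 + β * Ψ v - v) :=
    (continuous_const.add (continuous_const.mul hcont)).sub continuous_id
  have hg0 : 0 ≤ N0 + β * Ψ 0 - 0 := by
    have := mul_nonneg hβ0 (hnn 0)
    linarith
  have hgB : N0 + β * Ψ B - B ≤ 0 := by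
    have h1 : β * Ψ B ≤ β * (2*((M:ℝ)-1))^2 := mul_le_mul_of_nonneg_left (hub B) hβ0
    simp only [hB]
    linarith
  obtain ⟨v, hvmem, hgv⟩ := intermediate_value_Icc' hB0 hg.continuousOn ⟨hgB, hg0⟩
  have hfix : v = N0 + β * Ψ v := by dsimp at hgv; linarith
  have hvpos : 0 < v := by
    have := mul_nonneg hβ0 (hnn v)
    linarith [hfix]
  -- uniqueness
  have key : ∀ a b : ℝ, 0 < a → a = N0 + β*Ψ a → b = N0 + β*Ψ b → a < b → False := by
    intro a b ha hfa hfb hab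
    rcases eq_or_lt_of_le hβ0 with hb0 | hb0
    · rw [← hb0] at hfa hfb
      simp at hfa hfb
      rw [hfa] at hab
      rw [hfb] at hab
      exact lt_irrefl _ hab
    · have hd := hkey a b ha hab
      have h1M : 0 < 1 - 1/(M:ℝ) := by
        have : 1/(M:ℝ) < 1 := by
          rw [div_lt_one hMpos]
          linarith
        linarith
      have hβle : β * (1 - 1/(M:ℝ)) ≤ 1 := by
        calc β * (1 - 1/(M:ℝ)) ≤ (1 - 1/(M:ℝ))⁻¹ * (1 - 1/(M:ℝ)) :=
              mul_le_mul_of_nonneg_right hβ h1M.le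
          _ = 1 := inv_mul_cancel₀ h1M.ne'
      have heq : b - a = β * (Ψ b - Ψ a) := by
        calc b - a = (N0 + β * Ψ b) - (N0 + β * Ψ a) := by rw [← hfa, ← hfb]
          _ = β * (Ψ b - Ψ a) := by ring
      have hlt : β * (Ψ b - Ψ a) < β * ((1 - 1/(M:ℝ))*(b-a)) :=
        (mul_lt_mul_iff_right₀ hb0).2 hd
      have hle2 : β * ((1 - 1/(M:ℝ))*(b-a)) ≤ b - a := by
        have : β * ((1 - 1/(M:ℝ))*(b-a)) = (β * (1 - 1/(M:ℝ))) * (b-a) := by ring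
        rw [this]
        nlinarith [hβle, hab]
      linarith
  refine ⟨v, ⟨hvpos, hfix⟩, ?_⟩
  rintro y ⟨hy0, hyfix⟩
  rcases lt_trichotomy y v with h | h | h
  · exact (key y v hy0 hyfix hfix h).elim
  · exact h
  · exact (key v y hvpos hfix hyfix h).elim
end
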